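/- The extension f̄(x) = ⊓_{y∈Y} d_V(d(x,y), f(y)) is the largest non-expansive extension of f: if h : (X,d) → (V,d_V) is non-expansive with h|_Y = f, then h(x) ⊑ f̄(x) for all x ∈ X. -/
import Mathlib

variable {V : Type*}

/-- Residuation (internal hom) of a quantale. -/
def dres [CommMonoid V] [CompleteLattice V] (a c : V) : V := sSup {u | u * a ≤ c}

lemma dres_mul_le [CommMonoid V] [CompleteLattice V] [IsQuantale V] (a c : V) :
    dres a c * a ≤ c := by
  rw [dres, sSup_mul_distrib]
  exact iSup_le fun u => iSup_le fun hu => hu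

lemma le_dres [CommMonoid V] [CompleteLattice V] (a c u : V) (h : u * a ≤ c) :
    u ≤ dres a c := le_sSup h

/-- The McShane–Whitney extension is the largest non-expansive extension. -/
theorem stmt10 [CommMonoid V] [CompleteLattice V] [IsQuantale V]
    {X : Type*} (d : X → X → V)
    (hrefl : ∀ x, (1 : V) ≤ d x x)
    (htrans : ∀ x y z, d x y * d y z ≤ d x z)
    (Y : Set X) (f : Y → V)
    (hf : ∀ y₁ y₂ : Y, d (↑y₁) (↑y₂) ≤ dres (f y₁) (f y₂))
    (h : X → V)
    (hnonexp : ∀ x₁ x₂, d x₁ x₂ ≤ dres (h x₁) (h x₂))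
    (hext : ∀ y : Y, h ↑y = f y) :
    ∀ x, h x ≤ ⨅ y : Y, dres (d x ↑y) (f y) := by
  intro x
  refine le_iInf fun y => le_dres _ _ _ ?_
  calc h x * d x ↑y ≤ h x * dres (h x) (h ↑y) := by
        exact mul_le_mul_right (hnonexp x ↑y) _
    _ = dres (h x) (h ↑y) * h x := mul_comm _ _
    _ ≤ h ↑y := dres_mul_le _ _
    _ = f y := hext y
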